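/- Let (X, 𝒜, μ) be a probability space, T : X → X a bimeasurable bijection with T and T⁻¹ preserving μ, (L;ψ) a topological dynamical system, ν a ψ-invariant Borel probability measure on L, and p : X → L a measurable map with p_*μ = ν and p ∘ T = ψ ∘ p μ-almost everywhere. Let e_1, …, e_n be p-orthonormal essentially bounded measurable functions X → ℂ and suppose there are bounded Borel measurable f_{ij} : L → ℂ such that e_i ∘ T = Σ_j (f_{ij} ∘ p) · e_j μ-almost everywhere for each i. Then for ν-almost every l ∈ L the matrix (f_{ij}(l))_{ij} is unitary; in particular, for ν-almost every l and all i, j one has Σ_{k=1}^n f_{ik}(l) · conj(f_{jk}(l)) = 1 if i = j and = 0 if i ≠ j. -/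

import Mathlib

open MeasureTheory

/-- The sub-σ-algebra of the domain generated by a map `p : X → L`. -/
def fiberSigmaAlgebra {X L : Type*} [MeasurableSpace L] (p : X → L) : MeasurableSpace X :=
  MeasurableSpace.comap p inferInstance

/-- A family `e_1, …, e_n` of functions `X → ℂ` is `p`-orthonormal if the conditional
expectation of `e_i * conj (e_j)` with respect to the σ-algebra generated by `p` is
(almost everywhere) `1` when `i = j` and `0` otherwise. -/
def POrthonormal {X L : Type*} [MeasurableSpace X] [MeasurableSpace L] (μ : Measure X)
    (p : X → L) {n : ℕ} (e : Fin n → X → ℂ) : Prop :=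
  ∀ i j : Fin n,
    μ[(fun x => e i x * (starRingEnd ℂ) (e j x)) | fiberSigmaAlgebra p]
      =ᵐ[μ] fun _ => if i = j then (1 : ℂ) else 0

lemma aux_real_pullout {X : Type*} {m : MeasurableSpace X} [mX : MeasurableSpace X]
    (hm : m ≤ mX) {μ : Measure X} [IsProbabilityMeasure μ]
    {g h : X → ℝ} (hg : StronglyMeasurable[m] g) (hgC : ∃ C, ∀ x, ‖g x‖ ≤ C)
    (hh : Integrable h μ) {c : ℝ} (hc : μ[h|m] =ᵐ[μ] fun _ => c) :
    ∫ x, g x * h x ∂μ = c * ∫ x, g x ∂μ := by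
  haveI : SigmaFinite (μ.trim hm) := inferInstance
  have hg0 : AEStronglyMeasurable g μ := (hg.mono hm).aestronglyMeasurable
  have hgh : Integrable (g * h) μ := hh.bdd_mul hg0 (Filter.Eventually.of_forall hgC.choose_spec)
  have h1 := condExp_mul_of_stronglyMeasurable_left hg hgh hh
  have h2 : (g * μ[h|m]) =ᵐ[μ] fun x => g x * c := by
    filter_upwards [hc] with x hx
    simp [hx]
  calc ∫ x, g x * h x ∂μ = ∫ x, (g * h) x ∂μ := rfl
    _ = ∫ x, (μ[g * h|m]) x ∂μ := (integral_condExp hm (f := g * h)).symm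
    _ = ∫ x, g x * c ∂μ := integral_congr_ae (h1.trans h2)
    _ = c * ∫ x, g x ∂μ := by rw [integral_mul_const, mul_comm]

/-- Conditional expectation of real and imaginary parts, from the complex condexp being a
real constant. -/
lemma aux_condexp_re_im {X : Type*} {m : MeasurableSpace X} [mX : MeasurableSpace X]
    (hm : m ≤ mX) {μ : Measure X} [IsProbabilityMeasure μ]
    {h : X → ℂ} (hh : Integrable h μ) {c : ℝ}
    (hc : μ[h|m] =ᵐ[μ] fun _ => (c : ℂ)) :
    (μ[(fun x => (h x).re)|m] =ᵐ[μ] fun _ => c) ∧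
      (μ[(fun x => (h x).im)|m] =ᵐ[μ] fun _ => (0 : ℝ)) := by
  haveI : SigmaFinite (μ.trim hm) := inferInstance
  have hhre : Integrable (fun x => (h x).re) μ := by simpa using hh.re
  have hhim : Integrable (fun x => (h x).im) μ := by simpa using hh.im
  have key : ∀ s : Set X, MeasurableSet[m] s → ∫ x in s, h x ∂μ = ((μ s).toReal : ℂ) * c := by
    intro s hs
    calc ∫ x in s, h x ∂μ = ∫ x in s, (μ[h|m]) x ∂μ := (setIntegral_condExp hm hh hs).symm
      _ = ∫ _x in s, (c : ℂ) ∂μ :=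
          setIntegral_congr_ae (μ := μ) (hm s hs) (hc.mono fun x hx _ => hx)
      _ = ((μ s).toReal : ℂ) * c := by simp [mul_comm]; exact Or.inl rfl
  have hconst : ∀ c' : ℝ, AEStronglyMeasurable[m] (fun (_ : X) => c') μ :=
    fun c' => StronglyMeasurable.aestronglyMeasurable (@stronglyMeasurable_const X ℝ m _ c')
  constructor
  · refine (ae_eq_condExp_of_forall_setIntegral_eq hm hhre
      (fun s _ _ => (integrable_const c).integrableOn)
      (fun s hs hμs => ?_) (hconst c)).symm
    have h1 : ∫ x in s, (h x).re ∂μ = (∫ x in s, h x ∂μ).re := by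
      simpa using integral_re (μ := μ.restrict s) (hh.integrableOn (s := s))
    rw [h1, key s hs]
    simp [mul_comm]; exact Or.inl rfl
  · refine (ae_eq_condExp_of_forall_setIntegral_eq hm hhim
      (fun s _ _ => (integrable_const (0:ℝ)).integrableOn)
      (fun s hs hμs => ?_) (hconst 0)).symm
    have h1 : ∫ x in s, (h x).im ∂μ = (∫ x in s, h x ∂μ).im := by
      simpa using integral_im (μ := μ.restrict s) (hh.integrableOn (s := s))
    rw [h1, key s hs]
    simp

/-- Complex pull-out property in integral form, when the conditional expectation of `h` is a
real constant. -/
lemma aux_complex_pullout {X : Type*} {m : MeasurableSpace X} [mX : MeasurableSpace X]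
    (hm : m ≤ mX) {μ : Measure X} [IsProbabilityMeasure μ]
    {g h : X → ℂ} (hg : StronglyMeasurable[m] g) (hgC : ∃ C, ∀ x, ‖g x‖ ≤ C)
    (hh : Integrable h μ) {c : ℝ} (hc : μ[h|m] =ᵐ[μ] fun _ => (c : ℂ)) :
    ∫ x, g x * h x ∂μ = c * ∫ x, g x ∂μ := by
  obtain ⟨hre, him⟩ := aux_condexp_re_im hm hh hc
  obtain ⟨C, hC⟩ := hgC
  have hhre : Integrable (fun x => (h x).re) μ := by simpa using hh.re
  have hhim : Integrable (fun x => (h x).im) μ := by simpa using hh.im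
  have hgr : StronglyMeasurable[m] (fun x => (g x).re) :=
    (Complex.measurable_re.comp hg.measurable).stronglyMeasurable
  have hgi : StronglyMeasurable[m] (fun x => (g x).im) :=
    (Complex.measurable_im.comp hg.measurable).stronglyMeasurable
  have hgrC : ∃ C, ∀ x, ‖(g x).re‖ ≤ C :=
    ⟨C, fun x => (Complex.abs_re_le_norm (g x)).trans (hC x)⟩
  have hgiC : ∃ C, ∀ x, ‖(g x).im‖ ≤ C :=
    ⟨C, fun x => (Complex.abs_im_le_norm (g x)).trans (hC x)⟩
  have e1 := aux_real_pullout hm hgr hgrC hhre hre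
  have e2 := aux_real_pullout hm hgi hgiC hhim him
  have e3 := aux_real_pullout hm hgr hgrC hhim him
  have e4 := aux_real_pullout hm hgi hgiC hhre hre
  simp only [zero_mul] at e2 e3
  have hg0 : AEStronglyMeasurable g μ := (hg.mono hm).aestronglyMeasurable
  have hgh : Integrable (fun x => g x * h x) μ := hh.bdd_mul hg0 (Filter.Eventually.of_forall hC)
  have hgint : Integrable g μ :=
    ⟨hg0, HasFiniteIntegral.of_bounded (C := C) (Filter.Eventually.of_forall hC)⟩
  have i1 : Integrable (fun x => (g x).re * (h x).re) μ :=
    hhre.bdd_mul ((hgr.mono hm).aestronglyMeasurable) (Filter.Eventually.of_forall hgrC.choose_spec)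
  have i2 : Integrable (fun x => (g x).im * (h x).im) μ :=
    hhim.bdd_mul ((hgi.mono hm).aestronglyMeasurable) (Filter.Eventually.of_forall hgiC.choose_spec)
  have i3 : Integrable (fun x => (g x).re * (h x).im) μ :=
    hhim.bdd_mul ((hgr.mono hm).aestronglyMeasurable) (Filter.Eventually.of_forall hgrC.choose_spec)
  have i4 : Integrable (fun x => (g x).im * (h x).re) μ :=
    hhre.bdd_mul ((hgi.mono hm).aestronglyMeasurable) (Filter.Eventually.of_forall hgiC.choose_spec)
  have hgre : ∫ x, (g x).re ∂μ = (∫ x, g x ∂μ).re := by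
    simpa using integral_re (μ := μ) hgint
  have hgim : ∫ x, (g x).im ∂μ = (∫ x, g x ∂μ).im := by
    simpa using integral_im (μ := μ) hgint
  apply Complex.ext
  · have hre' : (∫ x, g x * h x ∂μ).re = ∫ x, (g x * h x).re ∂μ := by
      simpa using (integral_re (μ := μ) hgh).symm
    rw [hre']
    simp only [Complex.mul_re]
    rw [integral_sub i1 i2, e1, e2, sub_zero]
    simp [Complex.mul_re, hgre, Complex.ofReal_re, Complex.ofReal_im]
  · have him' : (∫ x, g x * h x ∂μ).im = ∫ x, (g x * h x).im ∂μ := by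
      simpa using (integral_im (μ := μ) hgh).symm
    rw [him']
    simp only [Complex.mul_im]
    rw [integral_add i3 i4, e3, e4, zero_add]
    simp [Complex.mul_im, hgim, Complex.ofReal_re, Complex.ofReal_im]

lemma aux_mul_conj_integrable {X : Type*} [mX : MeasurableSpace X]
    {μ : Measure X} [IsProbabilityMeasure μ]
    {u v : X → ℂ} (hu : Measurable u) (hv : Measurable v)
    (hbu : ∃ C : ℝ, ∀ᵐ x ∂μ, ‖u x‖ ≤ C) (hbv : ∃ C : ℝ, ∀ᵐ x ∂μ, ‖v x‖ ≤ C) :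
    Integrable (fun x => u x * (starRingEnd ℂ) (v x)) μ := by
  obtain ⟨C1, hC1⟩ := hbu
  obtain ⟨C2, hC2⟩ := hbv
  refine ⟨((hu.mul (continuous_star.measurable.comp hv))).aestronglyMeasurable,
    HasFiniteIntegral.of_bounded (C := C1 * C2) ?_⟩
  filter_upwards [hC1, hC2] with x h1 h2
  rw [norm_mul, RCLike.norm_conj]
  exact mul_le_mul h1 h2 (norm_nonneg _) (le_trans (norm_nonneg _) h1)

/-- The fundamental integral identity for a `p`-orthonormal family: integrating against any
bounded measurable function of `p` picks out the Kronecker delta. -/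
lemma aux_orth_integral {X L : Type*} [mX : MeasurableSpace X] [MeasurableSpace L]
    {μ : Measure X} [IsProbabilityMeasure μ] {p : X → L} (hp_meas : Measurable p)
    {n : ℕ} {e : Fin n → X → ℂ} (he_meas : ∀ i, Measurable (e i))
    (he_bdd : ∀ i, ∃ C : ℝ, ∀ᵐ x ∂μ, ‖e i x‖ ≤ C) (he_orth : POrthonormal μ p e)
    {g : L → ℂ} (hg : Measurable g) (hgC : ∃ C, ∀ l, ‖g l‖ ≤ C) (k k' : Fin n) :
    ∫ x, g (p x) * (e k x * (starRingEnd ℂ) (e k' x)) ∂μ =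
      (if k = k' then (1 : ℂ) else 0) * ∫ x, g (p x) ∂μ := by
  have hm : fiberSigmaAlgebra p ≤ mX := by
    rintro s ⟨t, ht, rfl⟩
    exact hp_meas ht
  have hp_m : Measurable[fiberSigmaAlgebra p] p := fun s hs => ⟨s, hs, rfl⟩
  have hgp : StronglyMeasurable[fiberSigmaAlgebra p] (fun x => g (p x)) :=
    (hg.comp hp_m).stronglyMeasurable
  obtain ⟨C, hC⟩ := hgC
  have hh : Integrable (fun x => e k x * (starRingEnd ℂ) (e k' x)) μ :=
    aux_mul_conj_integrable (he_meas k) (he_meas k') (he_bdd k) (he_bdd k')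
  have hc : μ[(fun x => e k x * (starRingEnd ℂ) (e k' x))|fiberSigmaAlgebra p]
      =ᵐ[μ] fun _ => (((if k = k' then (1:ℝ) else 0) : ℝ) : ℂ) := by
    refine (he_orth k k').trans (Filter.Eventually.of_forall fun x => ?_)
    split_ifs <;> simp
  have := aux_complex_pullout hm hgp ⟨C, fun x => hC (p x)⟩ hh hc
  rw [this]
  split_ifs <;> simp
/-- The matrix of coefficients of the Koopman operator with respect to a
`p`-orthonormal family is unitary almost everywhere. -/
theorem cocycle_matrix_ae_unitary
    {X : Type*} [MeasurableSpace X] (μ : Measure X) [IsProbabilityMeasure μ]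
    (T : X ≃ X) (hT_meas : Measurable T) (hT_inv_meas : Measurable T.symm)
    (hT : Measure.map T μ = μ) (hT' : Measure.map T.symm μ = μ)
    {L : Type*} [TopologicalSpace L] [CompactSpace L] [T2Space L] [Nonempty L]
    [MeasurableSpace L] [BorelSpace L]
    (ψ : L ≃ₜ L) (ν : Measure L) [IsProbabilityMeasure ν]
    (hν_inv : Measure.map ψ ν = ν)
    (p : X → L) (hp_meas : Measurable p) (hp_push : Measure.map p μ = ν)
    (hp_comm : (fun x => p (T x)) =ᵐ[μ] fun x => ψ (p x))
    {n : ℕ} (e : Fin n → X → ℂ)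
    (he_meas : ∀ i, Measurable (e i))
    (he_bdd : ∀ i, ∃ C : ℝ, ∀ᵐ x ∂μ, ‖e i x‖ ≤ C)
    (he_orth : POrthonormal μ p e)
    (f : Fin n → Fin n → L → ℂ)
    (hf_meas : ∀ i j, Measurable (f i j))
    (hf_bdd : ∀ i j, ∃ C : ℝ, ∀ l, ‖f i j l‖ ≤ C)
    (he_inv : ∀ i, (fun x => e i (T x)) =ᵐ[μ] fun x => ∑ j, f i j (p x) * e j x) :
    ∀ᵐ l ∂ν, (Matrix.of fun i j => f i j l) ∈ Matrix.unitaryGroup (Fin n) ℂ ∧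
      ∀ i j : Fin n, (∑ k, f i k l * (starRingEnd ℂ) (f j k l)) =
        if i = j then (1 : ℂ) else 0 := by
  classical
  choose Cf hCf using hf_bdd
  have hCf0 : ∀ i j, 0 ≤ Cf i j := fun i j =>
    le_trans (norm_nonneg _) (hCf i j (Classical.arbitrary L))
  have hint : ∀ (g : L → ℂ), Measurable g → (∃ C, ∀ l, ‖g l‖ ≤ C) →
      Integrable (fun x => g (p x)) μ := by
    rintro g hg ⟨C, hC⟩
    exact ⟨(hg.comp hp_meas).aestronglyMeasurable,
      HasFiniteIntegral.of_bounded (C := C) (Filter.Eventually.of_forall fun x => hC (p x))⟩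
  -- The key integral identity.
  have key2 : ∀ (i j : Fin n) (g : L → ℂ), Measurable g → (∃ C, ∀ l, ‖g l‖ ≤ C) →
      ∫ x, g (p x) * (∑ k, f i k (p x) * (starRingEnd ℂ) (f j k (p x))) ∂μ
        = (if i = j then (1:ℂ) else 0) * ∫ x, g (p x) ∂μ := by
    intro i j g hg hgC
    obtain ⟨Cg, hCg⟩ := hgC
    have hCg0 : 0 ≤ Cg := le_trans (norm_nonneg _) (hCg (Classical.arbitrary L))
    set G : Fin n → Fin n → L → ℂ :=
      fun k k' l => g l * f i k l * (starRingEnd ℂ) (f j k' l) with hG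
    have hGmeas : ∀ k k', Measurable (G k k') := fun k k' =>
      (hg.mul (hf_meas i k)).mul (continuous_star.measurable.comp (hf_meas j k'))
    have hGbdd : ∀ k k', ∃ C, ∀ l, ‖G k k' l‖ ≤ C := by
      intro k k'
      refine ⟨Cg * Cf i k * Cf j k', fun l => ?_⟩
      have : ‖G k k' l‖ = ‖g l‖ * ‖f i k l‖ * ‖f j k' l‖ := by
        rw [hG]; rw [norm_mul, norm_mul, RCLike.norm_conj]
      rw [this]
      exact mul_le_mul (mul_le_mul (hCg l) (hCf i k l) (norm_nonneg _) hCg0)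
        (hCf j k' l) (norm_nonneg _) (mul_nonneg hCg0 (hCf0 i k))
    have expand : (fun x => g (p x) * (e i (T x) * (starRingEnd ℂ) (e j (T x)))) =ᵐ[μ]
        fun x => ∑ k, ∑ k', G k k' (p x) * (e k x * (starRingEnd ℂ) (e k' x)) := by
      filter_upwards [he_inv i, he_inv j] with x h1 h2
      rw [h1, h2, map_sum, Finset.sum_mul_sum, Finset.mul_sum]
      refine Finset.sum_congr rfl fun k _ => ?_
      rw [Finset.mul_sum]
      refine Finset.sum_congr rfl fun k' _ => ?_
      simp only [hG, map_mul]
      ring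
    have hterm_int : ∀ k k',
        Integrable (fun x => G k k' (p x) * (e k x * (starRingEnd ℂ) (e k' x))) μ := by
      intro k k'
      obtain ⟨C, hC⟩ := hGbdd k k'
      exact (aux_mul_conj_integrable (he_meas k) (he_meas k') (he_bdd k) (he_bdd k')).bdd_mul
        ((hGmeas k k').comp hp_meas).aestronglyMeasurable (Filter.Eventually.of_forall fun x => hC (p x))
    have eqa : ∫ x, g (p x) * (e i (T x) * (starRingEnd ℂ) (e j (T x))) ∂μ
        = ∑ k, ∫ x, G k k (p x) ∂μ := by
      rw [integral_congr_ae expand,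
        integral_finset_sum _ (fun k _ => integrable_finset_sum _ (fun k' _ => hterm_int k k'))]
      refine Finset.sum_congr rfl fun k _ => ?_
      rw [integral_finset_sum _ (fun k' _ => hterm_int k k')]
      have hterm : ∀ k', ∫ x, G k k' (p x) * (e k x * (starRingEnd ℂ) (e k' x)) ∂μ
          = (if k = k' then (1:ℂ) else 0) * ∫ x, G k k' (p x) ∂μ := fun k' =>
        aux_orth_integral hp_meas he_meas he_bdd he_orth (hGmeas k k') (hGbdd k k') k k'
      simp only [hterm, ite_mul, one_mul, zero_mul]
      simp
    set F : X → ℂ := fun x => g (ψ.symm (p x)) * (e i x * (starRingEnd ℂ) (e j x)) with hF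
    have hgψ : Measurable fun l => g (ψ.symm l) := hg.comp ψ.symm.measurable
    have hgψC : ∃ C, ∀ l, ‖g (ψ.symm l)‖ ≤ C := ⟨Cg, fun l => hCg _⟩
    have hFmeas : Measurable F :=
      (hgψ.comp hp_meas).mul ((he_meas i).mul (continuous_star.measurable.comp (he_meas j)))
    have step1 : (fun x => g (p x) * (e i (T x) * (starRingEnd ℂ) (e j (T x)))) =ᵐ[μ]
        fun x => F (T x) := by
      filter_upwards [hp_comm] with x hx
      simp only [hF, hx, Homeomorph.symm_apply_apply]
    have step2 : ∫ x, F (T x) ∂μ = ∫ x, F x ∂μ := by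
      have h1 : ∫ y, F y ∂(Measure.map T μ) = ∫ x, F (T x) ∂μ :=
        integral_map hT_meas.aemeasurable (by rw [hT]; exact hFmeas.aestronglyMeasurable)
      rw [← h1, hT]
    have step3 : ∫ x, F x ∂μ
        = (if i = j then (1:ℂ) else 0) * ∫ x, g (ψ.symm (p x)) ∂μ :=
      aux_orth_integral hp_meas he_meas he_bdd he_orth hgψ hgψC i j
    have step4 : ∫ x, g (ψ.symm (p x)) ∂μ = ∫ x, g (p x) ∂μ := by
      have hh1 : ∫ x, g (ψ.symm (p x)) ∂μ = ∫ l, g (ψ.symm l) ∂ν := by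
        rw [← hp_push]
        exact (integral_map hp_meas.aemeasurable
          (by rw [hp_push]; exact hgψ.aestronglyMeasurable)).symm
      have hh2 : ∫ l, g (ψ.symm l) ∂ν = ∫ l, g l ∂ν := by
        conv_lhs => rw [← hν_inv]
        rw [integral_map ψ.measurable.aemeasurable
          (by rw [hν_inv]; exact hgψ.aestronglyMeasurable)]
        simp
      have hh3 : ∫ l, g l ∂ν = ∫ x, g (p x) ∂μ := by
        rw [← hp_push]
        exact integral_map hp_meas.aemeasurable (by rw [hp_push]; exact hg.aestronglyMeasurable)
      rw [hh1, hh2, hh3]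
    have eqb : ∫ x, g (p x) * (e i (T x) * (starRingEnd ℂ) (e j (T x))) ∂μ
        = (if i = j then (1:ℂ) else 0) * ∫ x, g (p x) ∂μ := by
      rw [integral_congr_ae step1, step2, step3, step4]
    have lhs_eq : ∫ x, g (p x) * (∑ k, f i k (p x) * (starRingEnd ℂ) (f j k (p x))) ∂μ
        = ∑ k, ∫ x, G k k (p x) ∂μ := by
      have hfe : (fun x => g (p x) * (∑ k, f i k (p x) * (starRingEnd ℂ) (f j k (p x))))
          = fun x => ∑ k, G k k (p x) := by
        funext x
        rw [Finset.mul_sum]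
        exact Finset.sum_congr rfl fun k _ => by simp only [hG]; ring
      rw [hfe, integral_finset_sum _ (fun k _ => hint (G k k) (hGmeas k k) (hGbdd k k))]
    rw [lhs_eq, ← eqa, eqb]
  -- Derive the a.e. identity on L for each pair (i, j).
  have main : ∀ i j : Fin n, ∀ᵐ l ∂ν,
      (∑ k, f i k l * (starRingEnd ℂ) (f j k l)) = if i = j then (1:ℂ) else 0 := by
    intro i j
    set H : L → ℂ :=
      fun l => (∑ k, f i k l * (starRingEnd ℂ) (f j k l)) - (if i = j then (1:ℂ) else 0) with hH
    have hHmeas : Measurable H :=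
      (Finset.measurable_sum Finset.univ (fun k _ =>
        (hf_meas i k).mul (continuous_star.measurable.comp (hf_meas j k)))).sub measurable_const
    have hHbdd : ∃ C, ∀ l, ‖H l‖ ≤ C := by
      refine ⟨(∑ k, Cf i k * Cf j k) + 1, fun l => ?_⟩
      calc ‖H l‖ ≤ ‖∑ k, f i k l * (starRingEnd ℂ) (f j k l)‖
            + ‖(if i = j then (1:ℂ) else 0)‖ := norm_sub_le _ _
        _ ≤ (∑ k, Cf i k * Cf j k) + 1 := by
            refine add_le_add (le_trans (norm_sum_le _ _)
              (Finset.sum_le_sum fun k _ => ?_)) (by split_ifs <;> simp)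
            rw [norm_mul, RCLike.norm_conj]
            exact mul_le_mul (hCf i k l) (hCf j k l) (norm_nonneg _) (hCf0 i k)
    obtain ⟨C, hC⟩ := hHbdd
    have hC0 : 0 ≤ C := le_trans (norm_nonneg _) (hC (Classical.arbitrary L))
    have hconjH : Measurable fun l => (starRingEnd ℂ) (H l) :=
      continuous_star.measurable.comp hHmeas
    have hconjHC : ∃ C', ∀ l, ‖(starRingEnd ℂ) (H l)‖ ≤ C' :=
      ⟨C, fun l => by rw [RCLike.norm_conj]; exact hC l⟩
    have happ := key2 i j (fun l => (starRingEnd ℂ) (H l)) hconjH hconjHC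
    have hint1 : Integrable (fun x => (starRingEnd ℂ) (H (p x)) * H (p x)) μ := by
      refine hint (fun l => (starRingEnd ℂ) (H l) * H l) (hconjH.mul hHmeas) ⟨C * C, fun l => ?_⟩
      rw [norm_mul, RCLike.norm_conj]
      exact mul_le_mul (hC l) (hC l) (norm_nonneg _) hC0
    have hint2 : Integrable (fun x => (starRingEnd ℂ) (H (p x))) μ :=
      hint _ hconjH hconjHC
    have heq : (fun x => (starRingEnd ℂ) (H (p x))
          * (∑ k, f i k (p x) * (starRingEnd ℂ) (f j k (p x))))
        = fun x => (starRingEnd ℂ) (H (p x)) * H (p x)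
          + (if i = j then (1:ℂ) else 0) * (starRingEnd ℂ) (H (p x)) := by
      funext x
      have hsum : (∑ k, f i k (p x) * (starRingEnd ℂ) (f j k (p x)))
          = H (p x) + (if i = j then (1:ℂ) else 0) := by rw [hH]; ring
      rw [hsum]; ring
    rw [heq, integral_add hint1 (hint2.const_mul _), integral_const_mul] at happ
    have hzero : ∫ x, (starRingEnd ℂ) (H (p x)) * H (p x) ∂μ = 0 :=
      add_eq_right.mp happ
    have hns_int : Integrable (fun x => Complex.normSq (H (p x))) μ := by
      refine ⟨(Complex.continuous_normSq.measurable.comp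
          (hHmeas.comp hp_meas)).aestronglyMeasurable,
        HasFiniteIntegral.of_bounded (C := C * C)
          (Filter.Eventually.of_forall fun x => ?_)⟩
      rw [Real.norm_of_nonneg (Complex.normSq_nonneg _)]
      have h1 : Complex.normSq (H (p x)) = ‖H (p x)‖ * ‖H (p x)‖ := by
        rw [Complex.normSq_eq_norm_sq, sq]
      rw [h1]
      exact mul_le_mul (hC _) (hC _) (norm_nonneg _) hC0
    have hnsq : ∫ x, Complex.normSq (H (p x)) ∂μ = 0 := by
      have hrw : (fun x => (starRingEnd ℂ) (H (p x)) * H (p x))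
          = fun x => ((Complex.normSq (H (p x)) : ℝ) : ℂ) := by
        funext x; rw [mul_comm, Complex.mul_conj]
      rw [hrw] at hzero
      have h2 : ∫ x, Complex.normSq (H (p x)) ∂μ
          = (∫ x, ((Complex.normSq (H (p x)) : ℝ) : ℂ) ∂μ).re := by
        simpa using integral_re (μ := μ) (hns_int.ofReal (𝕜 := ℂ))
      rw [h2, hzero, Complex.zero_re]
    have haeH : ∀ᵐ x ∂μ, H (p x) = 0 := by
      have h0 := (integral_eq_zero_iff_of_nonneg
        (fun x => Complex.normSq_nonneg (H (p x))) hns_int).mp hnsq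
      filter_upwards [h0] with x hx
      exact Complex.normSq_eq_zero.mp hx
    have hνH : ∀ᵐ l ∂ν, H l = 0 := by
      have h0 : MeasurableSet {l : L | H l = 0} := hHmeas (measurableSet_singleton 0)
      rw [← hp_push]
      exact (ae_map_iff hp_meas.aemeasurable h0).mpr haeH
    filter_upwards [hνH] with l hl
    have := sub_eq_zero.mp hl
    simpa [hH] using this
  have hall : ∀ᵐ l ∂ν, ∀ i j : Fin n,
      (∑ k, f i k l * (starRingEnd ℂ) (f j k l)) = if i = j then (1:ℂ) else 0 := by
    rw [ae_all_iff]
    intro i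
    rw [ae_all_iff]
    exact main i
  filter_upwards [hall] with l hl
  refine ⟨?_, fun i j => hl i j⟩
  rw [Matrix.mem_unitaryGroup_iff]
  ext i j
  simp only [Matrix.mul_apply, Matrix.star_apply, Matrix.one_apply, Matrix.of_apply,
    Complex.star_def]
  exact hl i j
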